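/- arXiv:1405.6437 — 3 statements merged into one kernel-verified Lean document; each statement's English description precedes it below -/
import Mathlib

section
/- Tensor product via concatenation: with π₁, π₂ as above and c ∈ ℝ, set c₁ = log(e^{c+φ(π₁)} + e^{ε(π₂)}) - log(e^{φ(π₁)} + e^{ε(π₂)}) and c₂ = c - c₁. Then e^c · (π₁ * π₂) = (e^{c₁} · π₁) * (e^{c₂} · π₂) as paths on [0, T+S]. -/
open MeasureTheory

/-- `ε(π) = log ∫₀ᴸ e^{-π(s)} ds` for a path on `[0,L]`. -/
noncomputable def eps (L : ℝ) (p : ℝ → ℝ) : ℝ :=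
  Real.log (∫ s in (0:ℝ)..L, Real.exp (-p s))

/-- The geometric root operator `(e^c · π)(t)` for a path on `[0,L]`. -/
noncomputable def rootOp (L c : ℝ) (p : ℝ → ℝ) : ℝ → ℝ := fun t =>
  p t + Real.log (1 + (Real.exp c - 1) * Real.exp (-(eps L p)) *
    ∫ s in (0:ℝ)..t, Real.exp (-p s))

/-- Concatenation of paths. -/
noncomputable def concat (T : ℝ) (p q : ℝ → ℝ) : ℝ → ℝ := fun t =>
  if t ≤ T then p t else p T + q (t - T)

theorem stmt_6 (T S c : ℝ) (hT : 0 < T) (hS : 0 < S) (p q : ℝ → ℝ)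
    (hp : ContinuousOn p (Set.Icc 0 T)) (hq : ContinuousOn q (Set.Icc 0 S))
    (hp0 : p 0 = 0) (hq0 : q 0 = 0)
    (c₁ c₂ : ℝ)
    (hc₁ : c₁ = Real.log (Real.exp (c + (p T + eps T p)) + Real.exp (eps S q)) -
        Real.log (Real.exp (p T + eps T p) + Real.exp (eps S q)))
    (hc₂ : c₂ = c - c₁) :
    ∀ t ∈ Set.Icc (0:ℝ) (T + S),
      rootOp (T + S) c (concat T p q) t =
        concat T (rootOp T c₁ p) (rootOp S c₂ q) t := by
  intro t ht
  obtain ⟨ht0, htTS⟩ := ht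
  have hpc : ContinuousOn (fun s => Real.exp (-p s)) (Set.Icc 0 T) :=
    Real.continuous_exp.comp_continuousOn hp.neg
  have hqc : ContinuousOn (fun s => Real.exp (-q s)) (Set.Icc 0 S) :=
    Real.continuous_exp.comp_continuousOn hq.neg
  set A := ∫ s in (0:ℝ)..T, Real.exp (-p s) with hA_def
  set B := ∫ s in (0:ℝ)..S, Real.exp (-q s) with hB_def
  have hpInt : IntervalIntegrable (fun s => Real.exp (-p s)) volume 0 T :=
    (hpc.mono (by rw [Set.uIcc_of_le hT.le])).intervalIntegrable
  have hqInt : IntervalIntegrable (fun s => Real.exp (-q s)) volume 0 S :=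
    (hqc.mono (by rw [Set.uIcc_of_le hS.le])).intervalIntegrable
  have hA : 0 < A :=
    intervalIntegral.intervalIntegral_pos_of_pos_on hpInt (fun x _ => Real.exp_pos _) hT
  have hB : 0 < B :=
    intervalIntegral.intervalIntegral_pos_of_pos_on hqInt (fun x _ => Real.exp_pos _) hS
  have hexpEpsT : Real.exp (eps T p) = A := Real.exp_log hA
  have hexpEpsS : Real.exp (eps S q) = B := Real.exp_log hB
  have hexpEpsT' : Real.exp (-eps T p) = A⁻¹ := by rw [Real.exp_neg, hexpEpsT]
  have hexpEpsS' : Real.exp (-eps S q) = B⁻¹ := by rw [Real.exp_neg, hexpEpsS]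
  set a := Real.exp (p T) with ha_def
  have ha : 0 < a := Real.exp_pos _
  -- value of exp c₁
  have hec1 : Real.exp c₁ = (Real.exp c * a * A + B) / (a * A + B) := by
    rw [hc₁, Real.exp_sub]
    rw [Real.exp_log (by positivity), Real.exp_log (by positivity)]
    rw [Real.exp_add, Real.exp_add, hexpEpsT, hexpEpsS]
    rw [← ha_def]
    ring_nf
  have haAB : 0 < a * A + B := by positivity
  have hec1pos : 0 < Real.exp c₁ := Real.exp_pos _
  have hec2 : Real.exp c₂ = Real.exp c * (a * A + B) / (Real.exp c * a * A + B) := by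
    rw [hc₂, Real.exp_sub, hec1]
    field_simp
  -- concat integral on [0,u] for u ≤ T equals the p-integral
  have hconcat_left : ∀ u : ℝ, u ≤ T →
      (∫ s in (0:ℝ)..u, Real.exp (-(concat T p q s))) = ∫ s in (0:ℝ)..u, Real.exp (-p s) := by
    intro u hu
    apply intervalIntegral.integral_congr
    intro s hs
    rcases le_or_gt 0 u with h0u | h0u
    · rw [Set.uIcc_of_le h0u] at hs
      simp only [concat, if_pos (hs.2.trans hu)]
    · rw [Set.uIcc_of_ge h0u.le] at hs
      simp only [concat, if_pos (hs.2.trans hT.le)]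
  -- concat on [T, u] equals shifted q
  have hconcat_right : ∀ s : ℝ, T ≤ s →
      concat T p q s = p T + q (s - T) := by
    intro s hs
    by_cases h : s ≤ T
    · have : s = T := le_antisymm h hs
      simp [concat, this, hq0]
    · simp [concat, h]
  -- integrability of concat integrand on [0,T]
  have hCInt1 : IntervalIntegrable (fun s => Real.exp (-(concat T p q s))) volume 0 T := by
    apply ContinuousOn.intervalIntegrable
    rw [Set.uIcc_of_le hT.le]
    apply ContinuousOn.congr hpc
    intro s hs
    simp only [concat, if_pos hs.2]
  -- the full-interval integral of the concat path, and on [T,u]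
  have hconcat_int : ∀ u : ℝ, T ≤ u → u ≤ T + S →
      (∫ s in (0:ℝ)..u, Real.exp (-(concat T p q s))) =
        A + a⁻¹ * ∫ s in (0:ℝ)..(u - T), Real.exp (-q s) := by
    intro u hTu huS
    have hInt2 : IntervalIntegrable (fun s => Real.exp (-(concat T p q s))) volume T u := by
      apply ContinuousOn.intervalIntegrable
      rw [Set.uIcc_of_le hTu]
      have hcont : ContinuousOn (fun s => Real.exp (-(p T + q (s - T)))) (Set.Icc T u) := by
        apply Real.continuous_exp.comp_continuousOn
        apply ContinuousOn.neg
        apply ContinuousOn.add continuousOn_const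
        apply hq.comp (continuous_sub_right T).continuousOn
        intro s hs
        simp only [Set.mem_Icc] at hs ⊢
        exact ⟨by linarith [hs.1], by linarith [hs.2]⟩
      apply hcont.congr
      intro s hs
      simp only
      rw [hconcat_right s hs.1]
    rw [← intervalIntegral.integral_add_adjacent_intervals hCInt1 hInt2]
    rw [hconcat_left T le_rfl]
    congr 1
    have : ∀ s ∈ Set.uIcc T u, Real.exp (-(concat T p q s)) =
        a⁻¹ * Real.exp (-q (s - T)) := by
      intro s hs
      rw [Set.uIcc_of_le hTu] at hs
      rw [hconcat_right s hs.1, ← Real.exp_neg, ← Real.exp_add]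
      ring_nf
    rw [intervalIntegral.integral_congr this, intervalIntegral.integral_const_mul]
    congr 1
    have := intervalIntegral.integral_comp_sub_right (a := T) (b := u)
      (fun s => Real.exp (-q s)) T
    rw [this]
    norm_num
  have hTS_int : (∫ s in (0:ℝ)..(T + S), Real.exp (-(concat T p q s))) = A + a⁻¹ * B := by
    rw [hconcat_int (T + S) (by linarith) le_rfl]
    norm_num
    exact Or.inl hB_def.symm
  have hABa : 0 < A + a⁻¹ * B := by positivity
  have hepsTS : eps (T + S) (concat T p q) = Real.log (A + a⁻¹ * B) := by
    unfold eps
    rw [hTS_int]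
  have hexpEpsTS : Real.exp (-eps (T + S) (concat T p q)) = (A + a⁻¹ * B)⁻¹ := by
    rw [hepsTS, Real.exp_neg, Real.exp_log hABa]
  by_cases htT : t ≤ T
  · -- left piece
    have hD0 : 0 ≤ ∫ s in (0:ℝ)..t, Real.exp (-p s) :=
      intervalIntegral.integral_nonneg ht0 (fun u _ => (Real.exp_pos _).le)
    set D := ∫ s in (0:ℝ)..t, Real.exp (-p s) with hD_def
    simp only [rootOp]
    rw [hconcat_left t htT, hexpEpsTS]
    simp only [concat, if_pos htT]
    simp only [rootOp]
    rw [hexpEpsT', ← hD_def]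
    congr 2
    rw [hec1]
    field_simp
    ring
  · -- right piece
    push_neg at htT
    set u := t - T with hu_def
    have hu0 : 0 ≤ u := by simp [hu_def]; linarith
    have huS : u ≤ S := by simp [hu_def]; linarith
    set C := ∫ s in (0:ℝ)..u, Real.exp (-q s) with hC_def
    have hC0 : 0 ≤ C :=
      intervalIntegral.integral_nonneg hu0 (fun x _ => (Real.exp_pos _).le)
    have hCB : C ≤ B := by
      apply intervalIntegral.integral_mono_interval le_rfl hu0 huS
      · filter_upwards with x using (Real.exp_pos _).le
      · exact hqInt
    have hconc_t : (∫ s in (0:ℝ)..t, Real.exp (-(concat T p q s))) = A + a⁻¹ * C := by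
      rw [hconcat_int t htT.le htTS]
    have hrootT : rootOp T c₁ p T = p T + c₁ := by
      simp only [rootOp]
      rw [← hA_def, hexpEpsT']
      congr 1
      rw [mul_assoc, inv_mul_cancel₀ hA.ne', mul_one]
      simp [Real.log_exp]
    have hden2 : 0 < Real.exp c * a * A + B := by positivity
    have hec2m1 : Real.exp c₂ - 1 = (Real.exp c - 1) * B / (Real.exp c * a * A + B) := by
      rw [hec2]
      field_simp
      ring
    have hY : 0 < 1 + (Real.exp c₂ - 1) * B⁻¹ * C := by
      have key : 1 + (Real.exp c₂ - 1) * B⁻¹ * C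
          = (Real.exp c * a * A + Real.exp c * C + (B - C)) / (Real.exp c * a * A + B) := by
        rw [hec2m1]
        field_simp
        ring
      rw [key]
      apply div_pos _ hden2
      have h1 : 0 < Real.exp c * a * A := by positivity
      have h2 : 0 ≤ Real.exp c * C := by positivity
      linarith
    have hRHS : concat T (rootOp T c₁ p) (rootOp S c₂ q) t
        = rootOp T c₁ p T + rootOp S c₂ q (t - T) := by
      simp only [concat]
      rw [if_neg (not_le.mpr htT)]
    have hLHSval : concat T p q t = p T + q (t - T) := hconcat_right t htT.le
    rw [hRHS, hrootT]
    simp only [rootOp]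
    rw [hconc_t, hexpEpsTS, hLHSval, hexpEpsS', ← hu_def, ← hC_def]
    have hX_eq : 1 + (Real.exp c - 1) * (A + a⁻¹ * B)⁻¹ * (A + a⁻¹ * C) =
        Real.exp c₁ * (1 + (Real.exp c₂ - 1) * B⁻¹ * C) := by
      rw [hec1, hec2m1]
      field_simp
      ring
    rw [hX_eq, Real.log_mul (Real.exp_ne_zero _) hY.ne', Real.log_exp]
    ring
end

section
/- Tropicalization of the root operator: for a continuous path π: [0,T] → ℝ with π(0)=0 and 0 < t < T, as h → 0+ the quantity h·log(e^{c/h} ∫₀ᵗ e^{-π(s)/h} ds + ∫ₜᵀ e^{-π(s)/h} ds) - h·log(∫₀ᵀ e^{-π(s)/h} ds) converges to inf_{0≤s≤T} π(s) - min(inf_{0≤s≤t} π(s) - c, inf_{t≤s≤T} π(s)). -/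
open Filter MeasureTheory
open Set



private lemma hlog_tendsto (K : ℝ) :
    Tendsto (fun h : ℝ => h * Real.log K) (nhdsWithin 0 (Set.Ioi 0)) (nhds 0) := by
  have : ContinuousAt (fun h : ℝ => h * Real.log K) 0 := continuousAt_id.mul continuousAt_const
  have := this.tendsto
  rw [zero_mul] at this
  exact this.mono_left nhdsWithin_le_nhds

private lemma exp_cont {p : ℝ → ℝ} {a b : ℝ} (hp : ContinuousOn p (Set.Icc a b)) (h : ℝ) :
    ContinuousOn (fun s => Real.exp (-p s / h)) (Set.Icc a b) :=
  Real.continuous_exp.comp_continuousOn (hp.neg.div_const h)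

private lemma exp_int {p : ℝ → ℝ} {a b : ℝ} (hab : a ≤ b) (hp : ContinuousOn p (Set.Icc a b))
    (h : ℝ) : IntervalIntegrable (fun s => Real.exp (-p s / h)) volume a b :=
  ContinuousOn.intervalIntegrable (by rw [Set.uIcc_of_le hab]; exact exp_cont hp h)

private lemma int_pos {p : ℝ → ℝ} {a b : ℝ} (hab : a < b) (hp : ContinuousOn p (Set.Icc a b))
    (h : ℝ) : 0 < ∫ s in a..b, Real.exp (-p s / h) :=
  intervalIntegral.intervalIntegral_pos_of_pos_on (exp_int hab.le hp h)
    (fun x _ => Real.exp_pos _) hab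

private lemma laplace {a b : ℝ} (hab : a < b) {p : ℝ → ℝ}
    (hp : ContinuousOn p (Set.Icc a b)) :
    Tendsto (fun h : ℝ => h * Real.log (∫ s in a..b, Real.exp (-p s / h)))
      (nhdsWithin 0 (Set.Ioi 0)) (nhds (-sInf (p '' Set.Icc a b))) := by
  obtain ⟨s₀, hs₀, hmin⟩ := isCompact_Icc.exists_isMinOn (nonempty_Icc.2 hab.le) hp
  have hm : sInf (p '' Set.Icc a b) = p s₀ := by
    refine IsLeast.csInf_eq ⟨⟨s₀, hs₀, rfl⟩, ?_⟩
    rintro _ ⟨s, hs, rfl⟩; exact hmin hs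
  rw [hm]
  set m := p s₀ with hmdef
  rw [tendsto_order]
  constructor
  · -- lower bound
    intro x hx
    set ε : ℝ := (-m - x) / 2 with hε
    have hεpos : 0 < ε := by simp only [hε]; linarith
    have hev : ∀ᶠ s in nhdsWithin s₀ (Set.Icc a b), p s < m + ε :=
      (hp s₀ hs₀) (Iio_mem_nhds (by linarith))
    rw [Filter.eventually_iff, Metric.mem_nhdsWithin_iff] at hev
    obtain ⟨δ, hδ, hball⟩ := hev
    set u := max a (s₀ - δ / 2) with hu
    set v := min b (s₀ + δ / 2) with hv
    have huv : u < v := by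
      rcases lt_or_ge s₀ b with hc | hc
      · have : s₀ < v := lt_min hc (by linarith)
        exact lt_of_le_of_lt (max_le hs₀.1 (by linarith)) this
      · have hsb : s₀ = b := le_antisymm hs₀.2 hc
        have : u < b := max_lt hab (by rw [hsb] at *; linarith)
        exact lt_of_lt_of_le this (le_min le_rfl (by rw [hsb] at *; linarith))
    have hsubIcc : Set.Icc u v ⊆ Set.Icc a b := fun s hs =>
      ⟨le_trans (le_max_left _ _) hs.1, le_trans hs.2 (min_le_left _ _)⟩
    have hpev : ∀ s ∈ Set.Icc u v, p s < m + ε := by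
      intro s hs
      have h1 : s₀ - δ / 2 ≤ s := le_trans (le_max_right _ _) hs.1
      have h2 : s ≤ s₀ + δ / 2 := le_trans hs.2 (min_le_right _ _)
      refine hball ⟨?_, hsubIcc hs⟩
      rw [Metric.mem_ball, Real.dist_eq, abs_lt]; constructor <;> linarith
    -- eventually h * log (v - u) > -ε
    have hev2 : ∀ᶠ h in nhdsWithin (0:ℝ) (Set.Ioi 0), -ε < h * Real.log (v - u) :=
      (hlog_tendsto (v - u)).eventually_const_lt (by linarith)
    filter_upwards [hev2, self_mem_nhdsWithin] with h hh (hhpos : h ∈ Set.Ioi 0)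
    have hhpos' : (0:ℝ) < h := hhpos
    have key : (v - u) * Real.exp (-(m + ε) / h) ≤ ∫ s in a..b, Real.exp (-p s / h) := by
      have step1 : (v - u) * Real.exp (-(m + ε) / h) ≤ ∫ s in u..v, Real.exp (-p s / h) := by
        have : ∫ s in u..v, Real.exp (-(m + ε) / h) ≤ ∫ s in u..v, Real.exp (-p s / h) := by
          refine intervalIntegral.integral_mono_on huv.le
            intervalIntegrable_const ((exp_int hab.le hp h).mono_set ?_) ?_
          · rw [Set.uIcc_of_le huv.le, Set.uIcc_of_le hab.le]; exact hsubIcc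
          · intro s hs
            apply Real.exp_le_exp.2
            have hps := (hpev s hs).le
            gcongr
        simpa [smul_eq_mul] using this
      refine step1.trans ?_
      refine intervalIntegral.integral_mono_interval (le_max_left _ _) huv.le (min_le_left _ _)
        ?_ (exp_int hab.le hp h)
      filter_upwards with s using (Real.exp_pos _).le
    have hIpos := int_pos hab hp h
    have hlow : h * Real.log (v - u) - (m + ε) ≤ h * Real.log (∫ s in a..b, Real.exp (-p s / h)) := by
      have hlog : Real.log ((v - u) * Real.exp (-(m + ε) / h)) ≤
          Real.log (∫ s in a..b, Real.exp (-p s / h)) :=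
        Real.log_le_log (mul_pos (by linarith) (Real.exp_pos _)) key
      rw [Real.log_mul (by linarith) (Real.exp_ne_zero _), Real.log_exp] at hlog
      have := mul_le_mul_of_nonneg_left hlog hhpos'.le
      calc h * Real.log (v - u) - (m + ε)
          = h * (Real.log (v - u) + -(m + ε) / h) := by field_simp; ring
        _ ≤ _ := this
    have : x < h * Real.log (v - u) - (m + ε) := by
      have : -m - ε = x + ε := by simp only [hε]; ring
      linarith [hh]
    linarith
  · -- upper bound
    intro x hx
    have hev2 : ∀ᶠ h in nhdsWithin (0:ℝ) (Set.Ioi 0), h * Real.log (b - a) < x + m :=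
      (hlog_tendsto (b - a)).eventually_lt_const (by linarith)
    filter_upwards [hev2, self_mem_nhdsWithin] with h hh (hhpos : h ∈ Set.Ioi 0)
    have hhpos' : (0:ℝ) < h := hhpos
    have key : (∫ s in a..b, Real.exp (-p s / h)) ≤ (b - a) * Real.exp (-m / h) := by
      have : ∫ s in a..b, Real.exp (-p s / h) ≤ ∫ s in a..b, Real.exp (-m / h) := by
        refine intervalIntegral.integral_mono_on hab.le (exp_int hab.le hp h)
          intervalIntegrable_const ?_
        intro s hs
        apply Real.exp_le_exp.2
        have hms := hmin hs
        gcongr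
        simpa using hms
      simpa [smul_eq_mul] using this
    have hIpos := int_pos hab hp h
    have hup : h * Real.log (∫ s in a..b, Real.exp (-p s / h)) ≤ h * Real.log (b - a) - m := by
      have hlog : Real.log (∫ s in a..b, Real.exp (-p s / h)) ≤
          Real.log ((b - a) * Real.exp (-m / h)) := Real.log_le_log hIpos key
      rw [Real.log_mul (by linarith) (Real.exp_ne_zero _), Real.log_exp] at hlog
      have := mul_le_mul_of_nonneg_left hlog hhpos'.le
      calc h * Real.log (∫ s in a..b, Real.exp (-p s / h)) ≤ h * (Real.log (b - a) + -m / h) := this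
        _ = h * Real.log (b - a) - m := by field_simp; ring
    linarith

private lemma hmul_max (h x y : ℝ) (hh : 0 ≤ h) : h * max x y = max (h * x) (h * y) := by
  rcases le_total x y with hxy | hxy
  · rw [max_eq_right hxy, max_eq_right (mul_le_mul_of_nonneg_left hxy hh)]
  · rw [max_eq_left hxy, max_eq_left (mul_le_mul_of_nonneg_left hxy hh)]

theorem stmt_10 (T t c : ℝ) (ht : 0 < t) (htT : t < T) (p : ℝ → ℝ)
    (hp : ContinuousOn p (Set.Icc 0 T)) (hp0 : p 0 = 0) :
    Tendsto (fun h : ℝ =>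
        h * Real.log (Real.exp (c / h) * (∫ s in (0:ℝ)..t, Real.exp (-p s / h)) +
            ∫ s in t..T, Real.exp (-p s / h)) -
          h * Real.log (∫ s in (0:ℝ)..T, Real.exp (-p s / h)))
      (nhdsWithin 0 (Set.Ioi 0))
      (nhds (sInf (p '' Set.Icc 0 T) -
        min (sInf (p '' Set.Icc 0 t) - c) (sInf (p '' Set.Icc t T)))) := by
  have h0T : (0:ℝ) < T := ht.trans htT
  have hp1 : ContinuousOn p (Set.Icc 0 t) := hp.mono (Set.Icc_subset_Icc le_rfl htT.le)
  have hp2 : ContinuousOn p (Set.Icc t T) := hp.mono (Set.Icc_subset_Icc ht.le le_rfl)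
  set m1 := sInf (p '' Set.Icc 0 t) with hm1
  set m2 := sInf (p '' Set.Icc t T) with hm2
  set M := sInf (p '' Set.Icc 0 T) with hM
  have hL1 := laplace ht hp1
  have hL2 := laplace htT hp2
  have hLT := laplace h0T hp
  set g : ℝ → ℝ := fun h =>
    max (c + h * Real.log (∫ s in (0:ℝ)..t, Real.exp (-p s / h)))
      (h * Real.log (∫ s in t..T, Real.exp (-p s / h))) with hg_def
  have hg : Tendsto g (nhdsWithin 0 (Set.Ioi 0)) (nhds (max (c + -m1) (-m2))) :=
    (tendsto_const_nhds.add hL1).max hL2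
  have hg2 : Tendsto (fun h => g h + h * Real.log 2) (nhdsWithin 0 (Set.Ioi 0))
      (nhds (max (c + -m1) (-m2))) := by
    simpa using hg.add (hlog_tendsto 2)
  have hkey : Tendsto (fun h : ℝ =>
      h * Real.log (Real.exp (c / h) * (∫ s in (0:ℝ)..t, Real.exp (-p s / h)) +
        ∫ s in t..T, Real.exp (-p s / h)))
      (nhdsWithin 0 (Set.Ioi 0)) (nhds (max (c + -m1) (-m2))) := by
    refine tendsto_of_tendsto_of_tendsto_of_le_of_le' hg hg2 ?_ ?_
    · filter_upwards [self_mem_nhdsWithin] with h (hh : h ∈ Set.Ioi 0)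
      have hhpos : (0:ℝ) < h := hh
      set A := ∫ s in (0:ℝ)..t, Real.exp (-p s / h) with hA_def
      set B := ∫ s in t..T, Real.exp (-p s / h) with hB_def
      have hA : 0 < A := int_pos ht hp1 h
      have hB : 0 < B := int_pos htT hp2 h
      set X := Real.exp (c / h) * A with hX_def
      have hX : 0 < X := mul_pos (Real.exp_pos _) hA
      have e1 : c + h * Real.log A = h * Real.log X := by
        rw [hX_def, Real.log_mul (Real.exp_ne_zero _) hA.ne', Real.log_exp, mul_add,
          mul_div_cancel₀ c hhpos.ne']
      show g h ≤ h * Real.log (X + B)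
      rw [hg_def]
      simp only [← hA_def, ← hB_def, e1]
      refine max_le ?_ ?_
      · exact mul_le_mul_of_nonneg_left
          (Real.log_le_log hX (le_add_of_nonneg_right hB.le)) hhpos.le
      · exact mul_le_mul_of_nonneg_left
          (Real.log_le_log hB (le_add_of_nonneg_left hX.le)) hhpos.le
    · filter_upwards [self_mem_nhdsWithin] with h (hh : h ∈ Set.Ioi 0)
      have hhpos : (0:ℝ) < h := hh
      set A := ∫ s in (0:ℝ)..t, Real.exp (-p s / h) with hA_def
      set B := ∫ s in t..T, Real.exp (-p s / h) with hB_def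
      have hA : 0 < A := int_pos ht hp1 h
      have hB : 0 < B := int_pos htT hp2 h
      set X := Real.exp (c / h) * A with hX_def
      have hX : 0 < X := mul_pos (Real.exp_pos _) hA
      have e1 : c + h * Real.log A = h * Real.log X := by
        rw [hX_def, Real.log_mul (Real.exp_ne_zero _) hA.ne', Real.log_exp, mul_add,
          mul_div_cancel₀ c hhpos.ne']
      show h * Real.log (X + B) ≤ g h + h * Real.log 2
      have hmaxpos : 0 < max X B := lt_max_of_lt_left hX
      have hsum : X + B ≤ 2 * max X B := by
        have := le_max_left X B; have := le_max_right X B; linarith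
      have hlog : Real.log (X + B) ≤ Real.log 2 + Real.log (max X B) := by
        calc Real.log (X + B) ≤ Real.log (2 * max X B) :=
              Real.log_le_log (by linarith) hsum
          _ = Real.log 2 + Real.log (max X B) :=
              Real.log_mul two_ne_zero hmaxpos.ne'
      have hlogmax : Real.log (max X B) = max (Real.log X) (Real.log B) := by
        rcases le_total X B with hc | hc
        · rw [max_eq_right hc, max_eq_right (Real.log_le_log hX hc)]
        · rw [max_eq_left hc, max_eq_left (Real.log_le_log hB hc)]
      calc h * Real.log (X + B) ≤ h * (Real.log 2 + Real.log (max X B)) :=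
            mul_le_mul_of_nonneg_left hlog hhpos.le
        _ = h * max (Real.log X) (Real.log B) + h * Real.log 2 := by
            rw [hlogmax]; ring
        _ = g h + h * Real.log 2 := by
            rw [hmul_max _ _ _ hhpos.le, hg_def]
            simp only [← hA_def, ← hB_def, e1]
  have heq : M - min (m1 - c) m2 = max (c + -m1) (-m2) - -M := by
    have : max (c + -m1) (-m2) = -min (m1 - c) m2 := by
      rw [← max_neg_neg]; ring_nf
    rw [this]; ring
  rw [heq]
  exact hkey.sub hLT
end

section
/- Rank-1 low-high duality: for π: [0,T] → ℝ continuous, define the low transform (e^{-∞}·π)(t) = π(t) + log(1 - ∫₀ᵗ e^{-π}/∫₀ᵀ e^{-π}) for t ∈ [0,T), and the high transform (𝒯π)(t) = π(t) + log ∫₀ᵗ e^{-π} for t ∈ (0,T]. Then e^{-∞}(ι(π))(t) = ι-extension of 𝒯(π), i.e. for all t ∈ [0,T), (e^{-∞}·ι(π))(t) = 𝒯π(T-t) - 𝒯π(T), where ι(π)(t) = π(T-t) - π(T). -/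
open MeasureTheory

/-- The low transform `(e^{-∞}·π)(t) = π(t) + log(1 - ∫₀ᵗ e^{-π}/∫₀ᵀ e^{-π})`. -/
noncomputable def lowT (T : ℝ) (p : ℝ → ℝ) : ℝ → ℝ := fun t =>
  p t + Real.log (1 - (∫ s in (0:ℝ)..t, Real.exp (-p s)) /
    ∫ s in (0:ℝ)..T, Real.exp (-p s))

/-- The high transform (rank-1 geometric Pitman transform)
`(𝒯π)(t) = π(t) + log ∫₀ᵗ e^{-π}`. -/
noncomputable def highT (p : ℝ → ℝ) : ℝ → ℝ := fun t =>
  p t + Real.log (∫ s in (0:ℝ)..t, Real.exp (-p s))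

/-- Time reversal `ι(π)(t) = π(T-t) - π(T)`. -/
def iota (T : ℝ) (p : ℝ → ℝ) : ℝ → ℝ := fun t => p (T - t) - p T

theorem stmt_16 (T : ℝ) (hT : 0 < T) (p : ℝ → ℝ)
    (hp : ContinuousOn p (Set.Icc 0 T)) :
    ∀ t ∈ Set.Ico (0:ℝ) T,
      lowT T (iota T p) t = highT p (T - t) - highT p T := by
  intro t ht
  obtain ⟨ht0, htT⟩ := ht
  set E : ℝ → ℝ := fun u => Real.exp (-p u) with hE
  have hEcont : ContinuousOn E (Set.Icc 0 T) := (hp.neg.rexp)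
  -- integrability of E on subintervals of [0,T]
  have hint : ∀ a b : ℝ, a ∈ Set.Icc (0:ℝ) T → b ∈ Set.Icc (0:ℝ) T →
      IntervalIntegrable E volume a b := by
    intro a b ha hb
    exact (hEcont.mono (Set.uIcc_subset_Icc ha hb)).intervalIntegrable
  have hmemTt : T - t ∈ Set.Icc (0:ℝ) T :=
    ⟨by linarith, by linarith⟩
  have hmemT : T ∈ Set.Icc (0:ℝ) T := ⟨le_of_lt hT, le_refl T⟩
  have hmem0 : (0:ℝ) ∈ Set.Icc (0:ℝ) T := ⟨le_refl 0, le_of_lt hT⟩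
  -- positivity
  have hIpos : ∀ x : ℝ, 0 < x → x ≤ T → 0 < ∫ s in (0:ℝ)..x, E s := by
    intro x hx0 hxT
    apply intervalIntegral.intervalIntegral_pos_of_pos_on
      (hint 0 x hmem0 ⟨le_of_lt hx0, hxT⟩)
    · intro s _
      exact Real.exp_pos _
    · exact hx0
  have hITpos : 0 < ∫ s in (0:ℝ)..T, E s := hIpos T hT le_rfl
  have hITtpos : 0 < ∫ s in (0:ℝ)..(T - t), E s :=
    hIpos (T - t) (by linarith) (by linarith)
  -- substitution identity
  have hsub : ∀ u : ℝ, 0 ≤ u → u ≤ T →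
      (∫ s in (0:ℝ)..u, Real.exp (-(iota T p s))) =
        Real.exp (p T) * ((∫ s in (0:ℝ)..T, E s) - ∫ s in (0:ℝ)..(T - u), E s) := by
    intro u hu0 huT
    have h1 : (∫ s in (0:ℝ)..u, Real.exp (-(iota T p s))) =
        ∫ s in (0:ℝ)..u, Real.exp (p T) * E (T - s) := by
      apply intervalIntegral.integral_congr
      intro s _
      simp only [iota, hE, ← Real.exp_add]
      ring_nf
    rw [h1, intervalIntegral.integral_const_mul]
    congr 1
    have h2 : (∫ s in (0:ℝ)..u, E (T - s)) = ∫ s in (T - u)..(T - 0), E s :=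
      intervalIntegral.integral_comp_sub_left E T
    rw [h2]
    simp only [sub_zero]
    rw [intervalIntegral.integral_interval_sub_left
      (hint 0 T hmem0 hmemT) (hint 0 (T - u) hmem0 ⟨by linarith, by linarith⟩)]
  -- compute the ratio
  have hAt := hsub t ht0 (le_of_lt htT)
  have hAT := hsub T (le_of_lt hT) le_rfl
  have hATval : (∫ s in (0:ℝ)..T, Real.exp (-(iota T p s))) =
      Real.exp (p T) * ∫ s in (0:ℝ)..T, E s := by
    rw [hAT]; simp
  have hratio : 1 - (∫ s in (0:ℝ)..t, Real.exp (-(iota T p s))) /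
      (∫ s in (0:ℝ)..T, Real.exp (-(iota T p s))) =
      (∫ s in (0:ℝ)..(T - t), E s) / ∫ s in (0:ℝ)..T, E s := by
    rw [hAt, hATval]
    field_simp
    ring
  simp only [lowT, highT]
  rw [hratio, Real.log_div (ne_of_gt hITtpos) (ne_of_gt hITpos)]
  simp only [iota, hE]; ring
end
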